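/- There is an absolute constant C > 0 with the following property: for every α ∈ (0,1) and every U ∈ 𝒰 that is differentiable on (0,π) with t·U'(t) ≤ α·U(t) for all t ∈ (0,π), the conjugate function V satisfies |V(t)| ≤ C·(√α/(1 − α))·U(t) for all t ∈ (0, π/2]. -/

import Mathlib

open MeasureTheory Filter Set

noncomputable section

noncomputable def hU (U : ℝ → ℝ) (t : ℝ) : ℝ := ∫ x in t..Real.pi, U x / x ^ 2

def ClassU (U : ℝ → ℝ) : Prop :=
  Continuous U ∧ (∀ t, U (-t) = U t) ∧ Function.Periodic U (2 * Real.pi) ∧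
  U 0 = 0 ∧ MonotoneOn U (Set.Icc 0 Real.pi) ∧
  (∀ t, 0 < t → t ≤ Real.pi → 0 < U t) ∧
  Tendsto (fun t => hU U t) (nhdsWithin 0 (Set.Ioi 0)) atTop

/-- The conjugate function of `U`. -/
noncomputable def conjFun (U : ℝ → ℝ) (t : ℝ) : ℝ :=
  (1 / (2 * Real.pi)) * (∫ x in (0 : ℝ)..t, (U (t - x) - U (t + x)) / Real.tan (x / 2)) -
  (1 / (2 * Real.pi)) * (∫ x in t..Real.pi, (U (x + t) - U (x - t)) / Real.tan (x / 2))

namespace Stmt15Aux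

open Real

lemma myIntegrable_of_bound {f : ℝ → ℝ} {a b C : ℝ} (hab : a ≤ b)
    (hm : Measurable f) (h : ∀ x ∈ Set.Ioc a b, |f x| ≤ C) :
    IntervalIntegrable f MeasureTheory.volume a b := by
  rw [intervalIntegrable_iff_integrableOn_Ioc_of_le hab]
  have hC : IntegrableOn (fun _ : ℝ => C) (Set.Ioc a b) volume := by
    exact integrableOn_const measure_Ioc_lt_top.ne
  apply Integrable.mono' hC hm.aestronglyMeasurable.restrict
  rw [ae_restrict_iff' measurableSet_Ioc]
  exact ae_of_all _ (fun x hx => by simpa using h x hx)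

lemma myRatio {U U' : ℝ → ℝ} {α : ℝ} (hα : 0 ≤ α)
    (hc : Continuous U)
    (hd : ∀ s ∈ Set.Ioo (0:ℝ) π, HasDerivAt U (U' s) s)
    (hg : ∀ s ∈ Set.Ioo (0:ℝ) π, s * U' s ≤ α * U s)
    {a b : ℝ} (ha : 0 < a) (hab : a ≤ b) (hb : b ≤ π) :
    U b * a ^ α ≤ U a * b ^ α := by
  rcases eq_or_lt_of_le hab with rfl | hab'
  · exact le_of_eq rfl
  have hb0 : 0 < b := lt_of_lt_of_le ha hab
  have key : AntitoneOn (fun s => U s / s ^ α) (Set.Icc a b) := by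
    have hsub : Set.Ioo a b ⊆ Set.Ioo 0 π := fun x hx => ⟨lt_trans ha hx.1, lt_of_lt_of_le hx.2 hb⟩
    have hder : ∀ x ∈ interior (Set.Icc a b),
        HasDerivAt (fun s => U s / s ^ α)
          ((U' x * x ^ α - U x * (α * x ^ (α - 1))) / (x ^ α) ^ 2) x := by
      intro x hx
      rw [interior_Icc] at hx
      have hx0 : 0 < x := lt_trans ha hx.1
      exact (hd x (hsub hx)).div (Real.hasDerivAt_rpow_const (Or.inl hx0.ne'))
        (Real.rpow_pos_of_pos hx0 α).ne'
    apply antitoneOn_of_deriv_nonpos (convex_Icc a b)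
    · exact (hc.continuousOn.div (continuousOn_id.rpow_const
        (fun x hx => Or.inl (lt_of_lt_of_le ha hx.1).ne'))
        (fun x hx => (Real.rpow_pos_of_pos (lt_of_lt_of_le ha hx.1) α).ne'))
    · intro x hx
      exact (hder x hx).differentiableAt.differentiableWithinAt
    · intro x hx
      rw [(hder x hx).deriv]
      rw [interior_Icc] at hx
      have hx0 : 0 < x := lt_trans ha hx.1
      apply div_nonpos_of_nonpos_of_nonneg _ (sq_nonneg _)
      have h1 : x ^ α = x ^ (α - 1) * x := by
        rw [← Real.rpow_add_one hx0.ne' (α - 1)]; ring_nf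
      have h2 : x * U' x ≤ α * U x := hg x (hsub hx)
      have h3 : 0 ≤ x ^ (α - 1) := (Real.rpow_pos_of_pos hx0 _).le
      calc U' x * x ^ α - U x * (α * x ^ (α - 1))
          = x ^ (α - 1) * (x * U' x - α * U x) := by rw [h1]; ring
        _ ≤ 0 := mul_nonpos_of_nonneg_of_nonpos h3 (by linarith)
  have := key (Set.left_mem_Icc.2 hab) (Set.right_mem_Icc.2 hab) hab
  rwa [div_le_div_iff₀ (Real.rpow_pos_of_pos hb0 α) (Real.rpow_pos_of_pos ha α)] at this

end Stmt15Aux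

open Stmt15Aux Real in
set_option maxHeartbeats 4000000 in
theorem stmt15 :
    ∃ C : ℝ, 0 < C ∧
      ∀ (α : ℝ), 0 < α → α < 1 →
        ∀ (U U' : ℝ → ℝ), ClassU U →
          (∀ t ∈ Set.Ioo (0 : ℝ) Real.pi, HasDerivAt U (U' t) t) →
          (∀ t ∈ Set.Ioo (0 : ℝ) Real.pi, t * U' t ≤ α * U t) →
          ∀ t : ℝ, 0 < t → t ≤ Real.pi / 2 →
            |conjFun U t| ≤ C * (Real.sqrt α / (1 - α)) * U t := by
  refine ⟨31, by norm_num, ?_⟩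
  intro α hα0 hα1 U U' hCU hd hg t ht0 ht2
  obtain ⟨hc, heven, hper, hU0, hmono, hposU, -⟩ := hCU
  have hπ : 0 < π := Real.pi_pos
  have h2t : 2 * t ≤ π := by linarith
  have htπ : t < π := by linarith
  have hUt : 0 < U t := hposU t ht0 (by linarith)
  -- square root facts
  have hsα : 0 < Real.sqrt α := Real.sqrt_pos.2 hα0
  have hsα1 : Real.sqrt α < 1 := by
    have := Real.sqrt_lt_sqrt hα0.le hα1
    simpa using this
  have hss : Real.sqrt α * Real.sqrt α = α := Real.mul_self_sqrt hα0.le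
  have hαs : α ≤ Real.sqrt α := by
    have h := mul_le_mul_of_nonneg_left hsα1.le hsα.le
    rw [mul_one] at h
    linarith [hss]
  set β : ℝ := Real.sqrt α / 2 with hβdef
  have hβ0 : 0 < β := by positivity
  have hβh : β < 1 / 2 := by simp only [hβdef]; linarith
  set p : ℝ := t * (1 - β) with hpdef
  set q : ℝ := t * (1 + β) with hqdef
  have hp0 : 0 < p := mul_pos ht0 (by linarith)
  have hppt : p < t := by
    have h := mul_pos ht0 hβ0
    simp only [hpdef]; nlinarith [h]
  have htq : t < q := by
    have h := mul_pos ht0 hβ0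
    simp only [hqdef]; nlinarith [h]
  have hq2t : q < 2 * t := by
    have h := mul_lt_mul_of_pos_left hβh ht0
    simp only [hqdef]; nlinarith [h]
  have h1α : 0 < 1 - α := by linarith
  -- monotonicity and nonnegativity
  have hmono' : ∀ a b : ℝ, 0 ≤ a → a ≤ b → b ≤ π → U a ≤ U b := fun a b h1 h2 h3 =>
    hmono ⟨h1, by linarith⟩ ⟨by linarith, h3⟩ h2
  have hUnn : ∀ s : ℝ, 0 ≤ s → s ≤ π → 0 ≤ U s := fun s h1 h2 =>
    hU0 ▸ hmono' 0 s le_rfl h1 h2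
  -- reflection
  have hrefl : ∀ s : ℝ, π ≤ s → s ≤ 2 * π → U s = U (2 * π - s) := by
    intro s h1 h2
    have := hper (s - 2 * π)
    have e1 : U s = U (s - 2 * π) := by
      rw [← this]; ring_nf
    rw [e1, ← heven (2 * π - s)]; ring_nf
  -- ratio and difference lemmas
  have hratio : ∀ a b : ℝ, 0 < a → a ≤ b → b ≤ π → U b * a ^ α ≤ U a * b ^ α :=
    fun a b h1 h2 h3 => myRatio hα0.le hc hd hg h1 h2 h3
  have hdiff : ∀ a b : ℝ, 0 < a → a ≤ b → b ≤ π →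
      U b - U a ≤ α * U a * ((b - a) / a) := by
    intro a b h1 h2 h3
    have hb0 : 0 < b := lt_of_lt_of_le h1 h2
    have h4 : U b ≤ U a * (b / a) ^ α := by
      have := hratio a b h1 h2 h3
      rw [Real.div_rpow hb0.le h1.le, ← mul_div_assoc,
        le_div_iff₀ (Real.rpow_pos_of_pos h1 α)]
      linarith [this]
    have h5 : (b / a) ^ α ≤ 1 + α * ((b - a) / a) := by
      have hs : (-1 : ℝ) ≤ (b - a) / a := by
        have : (0:ℝ) ≤ (b - a) / a := div_nonneg (by linarith) h1.le
        linarith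
      have := rpow_one_add_le_one_add_mul_self hs hα0.le hα1.le
      have e : 1 + (b - a) / a = b / a := by field_simp; ring
      rw [e] at this; exact this
    have hUa : 0 ≤ U a := hUnn a h1.le (by linarith)
    linarith [h4, mul_le_mul_of_nonneg_left h5 hUa]
  -- tan facts
  have htan : ∀ x : ℝ, 0 < x → x < π → 0 < Real.tan (x / 2) :=
    fun x h1 h2 => Real.tan_pos_of_pos_of_lt_pi_div_two (by linarith) (by linarith)
  have hdiv : ∀ d x : ℝ, 0 ≤ d → 0 < x → x < π → d / Real.tan (x / 2) ≤ 2 * d / x := by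
    intro d x h1 h2 h3
    have h4 : x / 2 < Real.tan (x / 2) := Real.lt_tan (by linarith) (by linarith)
    have : d / Real.tan (x / 2) ≤ d / (x / 2) :=
      div_le_div_of_nonneg_left h1 (by linarith) h4.le
    calc d / Real.tan (x / 2) ≤ d / (x / 2) := this
      _ = 2 * d / x := by field_simp
  -- D facts
  have hDnn : ∀ x : ℝ, t ≤ x → x ≤ π → U (x - t) ≤ U (x + t) := by
    intro x h1 h2
    rcases le_or_gt (x + t) π with h3 | h3
    · exact hmono' (x - t) (x + t) (by linarith) (by linarith) h3
    · rw [hrefl (x + t) h3.le (by linarith)]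
      exact hmono' (x - t) (2 * π - (x + t)) (by linarith) (by linarith) (by linarith)
  have hDnn1 : ∀ x : ℝ, 0 ≤ x → x ≤ t → U (t - x) ≤ U (t + x) :=
    fun x h1 h2 => hmono' (t - x) (t + x) (by linarith) (by linarith) (by linarith)
  have hUb : ∀ x : ℝ, t ≤ x → x ≤ π → U (x + t) ≤ U (min (x + t) π) := by
    intro x h1 h2
    rcases le_or_gt (x + t) π with h3 | h3
    · rw [min_eq_left h3]
    · rw [min_eq_right h3.le, hrefl (x + t) h3.le (by linarith)]
      exact hmono' (2 * π - (x + t)) π (by linarith) (by linarith) le_rfl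
  have hDle : ∀ x : ℝ, t < x → x ≤ π →
      U (x + t) - U (x - t) ≤ α * U (x - t) * (2 * t / (x - t)) := by
    intro x h1 h2
    have hxt0 : 0 < x - t := by linarith
    have hmin1 : x - t ≤ min (x + t) π := le_min (by linarith) (by linarith)
    have hmin2 : min (x + t) π ≤ π := min_le_right _ _
    have h3 := hdiff (x - t) (min (x + t) π) hxt0 hmin1 hmin2
    have h4 := hUb x h1.le h2
    have h5 : (min (x + t) π - (x - t)) / (x - t) ≤ 2 * t / (x - t) := by
      have h5a : min (x + t) π - (x - t) ≤ 2 * t := by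
        have := min_le_left (x + t) π; linarith
      gcongr
    have hUnnxt : 0 ≤ U (x - t) := hUnn (x - t) hxt0.le (by linarith)
    have h6 := mul_le_mul_of_nonneg_left h5 (mul_nonneg hα0.le hUnnxt)
    calc U (x + t) - U (x - t) ≤ U (min (x + t) π) - U (x - t) := by linarith
      _ ≤ α * U (x - t) * ((min (x + t) π - (x - t)) / (x - t)) := h3
      _ ≤ α * U (x - t) * (2 * t / (x - t)) := by linarith
  have hcap3 : ∀ x : ℝ, t ≤ x → x ≤ 2 * t → U (x + t) ≤ 3 * U t := by
    intro x h1 h2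
    have h3 := hUb x h1 (by linarith)
    have hmin1 : t ≤ min (x + t) π := le_min (by linarith) (by linarith)
    have hmin2 : min (x + t) π ≤ π := min_le_right _ _
    have h4 := hdiff t (min (x + t) π) ht0 hmin1 hmin2
    have h5 : (min (x + t) π - t) / t ≤ 2 := by
      rw [div_le_iff₀ ht0]
      have : min (x + t) π ≤ x + t := min_le_left _ _
      linarith
    have h6 := mul_le_mul_of_nonneg_left h5 (mul_nonneg hα0.le hUt.le)
    have h7 : U t ≤ U t := le_rfl
    have h8 : α * U t * 2 ≤ 2 * U t := by
      linarith [mul_le_mul_of_nonneg_right hα1.le hUt.le]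
    calc U (x + t) ≤ U (min (x + t) π) := h3
      _ ≤ U t + α * U t * ((min (x + t) π - t) / t) := by linarith [h4]
      _ ≤ U t + α * U t * 2 := by linarith
      _ ≤ 3 * U t := by linarith [mul_le_mul_of_nonneg_right hα1.le hUt.le]
  have hcap1 : ∀ x : ℝ, 0 ≤ x → x ≤ t → U (t + x) ≤ 2 * U t := by
    intro x h1 h2
    have h4 := hdiff t (t + x) ht0 (by linarith) (by linarith)
    have h5 : (t + x - t) / t ≤ 1 := by rw [div_le_one ht0]; linarith
    have h6 := mul_le_mul_of_nonneg_left h5 (mul_nonneg hα0.le hUt.le)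
    calc U (t + x) ≤ U t + α * U t * ((t + x - t) / t) := by linarith [h4]
      _ ≤ U t + α * U t * 1 := by linarith
      _ ≤ 2 * U t := by linarith [mul_le_mul_of_nonneg_right hα1.le hUt.le]

  -- the two integrands
  set f₁ : ℝ → ℝ := fun x => (U (t - x) - U (t + x)) / Real.tan (x / 2) with hf₁
  set f₂ : ℝ → ℝ := fun x => (U (x + t) - U (x - t)) / Real.tan (x / 2) with hf₂
  have mtan : Measurable fun x : ℝ => Real.tan (x / 2) := by
    have e : (fun x : ℝ => Real.tan (x / 2)) = fun x : ℝ => Real.sin (x / 2) / Real.cos (x / 2) := by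
      funext x; rw [Real.tan_eq_sin_div_cos]
    rw [e]
    exact ((Real.continuous_sin.comp (continuous_id.div_const 2)).measurable).div
      ((Real.continuous_cos.comp (continuous_id.div_const 2)).measurable)
  have hm1 : Measurable f₁ :=
    (((hc.comp (continuous_const.sub continuous_id)).sub
      (hc.comp (continuous_const.add continuous_id))).measurable).div mtan
  have hm2 : Measurable f₂ :=
    (((hc.comp (continuous_id.add continuous_const)).sub
      (hc.comp (continuous_id.sub continuous_const))).measurable).div mtan
  have habs1 : ∀ x : ℝ, 0 < x → x ≤ t → |f₁ x| = (U (t + x) - U (t - x)) / Real.tan (x / 2) := by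
    intro x h1 h2
    have h3 : 0 < Real.tan (x / 2) := htan x h1 (by linarith)
    have h4 : U (t - x) ≤ U (t + x) := hDnn1 x h1.le h2
    simp only [hf₁]
    rw [abs_div, abs_of_pos h3, abs_sub_comm, abs_of_nonneg (by linarith)]
  have habs2 : ∀ x : ℝ, t ≤ x → x < π → |f₂ x| = (U (x + t) - U (x - t)) / Real.tan (x / 2) := by
    intro x h1 h2
    have h3 : 0 < Real.tan (x / 2) := htan x (by linarith) h2
    have h4 : U (x - t) ≤ U (x + t) := hDnn x h1 h2.le
    simp only [hf₂]
    rw [abs_div, abs_of_pos h3, abs_of_nonneg (by linarith)]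
  -- pointwise bounds
  have hb1 : ∀ x ∈ Set.Ioc (0:ℝ) p, |f₁ x| ≤ 4 * α * U t / (t - x) := by
    intro x hx
    obtain ⟨hx0, hxp⟩ := hx
    have hxt : x < t := lt_of_le_of_lt hxp hppt
    have htx0 : 0 < t - x := by linarith
    have hD := hdiff (t - x) (t + x) htx0 (by linarith) (by linarith)
    have e0 : (t + x - (t - x)) / (t - x) = 2 * x / (t - x) := by ring_nf
    have hUtx : U (t - x) ≤ U t := hmono' (t - x) t (by linarith) (by linarith) (by linarith)
    have hfrac : 0 ≤ 2 * x / (t - x) := by positivity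
    have hD2 : U (t + x) - U (t - x) ≤ α * U t * (2 * x / (t - x)) := by
      rw [e0] at hD
      linarith [hD, mul_le_mul_of_nonneg_right (mul_le_mul_of_nonneg_left hUtx hα0.le) hfrac]
    rw [habs1 x hx0 hxt.le]
    have hDnn' : 0 ≤ U (t + x) - U (t - x) := by linarith [hDnn1 x hx0.le hxt.le]
    calc (U (t + x) - U (t - x)) / Real.tan (x / 2)
        ≤ 2 * (U (t + x) - U (t - x)) / x := hdiv _ x hDnn' hx0 (by linarith)
      _ ≤ 2 * (α * U t * (2 * x / (t - x))) / x := by gcongr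
      _ = 4 * α * U t / (t - x) := by field_simp; ring
  have hb2 : ∀ x ∈ Set.Ioc p t, |f₁ x| ≤ 4 * U t / p := by
    intro x hx
    obtain ⟨hxp, hxt⟩ := hx
    have hx0 : 0 < x := lt_trans hp0 hxp
    rw [habs1 x hx0 hxt]
    have hDnn' : 0 ≤ U (t + x) - U (t - x) := by linarith [hDnn1 x hx0.le hxt]
    have hcap := hcap1 x hx0.le hxt
    have hUnn' : 0 ≤ U (t - x) := hUnn (t - x) (by linarith) (by linarith)
    calc (U (t + x) - U (t - x)) / Real.tan (x / 2)
        ≤ 2 * (U (t + x) - U (t - x)) / x := hdiv _ x hDnn' hx0 (by linarith)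
      _ ≤ 2 * (2 * U t) / x := by gcongr; linarith
      _ = 4 * U t / x := by ring
      _ ≤ 4 * U t / p := by gcongr
  have hb3 : ∀ x ∈ Set.Ioc t q, |f₂ x| ≤ 6 * U t / t := by
    intro x hx
    obtain ⟨hxt, hxq⟩ := hx
    have hxπ : x < π := by linarith [hq2t, h2t]
    rw [habs2 x hxt.le hxπ]
    have hDnn' : 0 ≤ U (x + t) - U (x - t) := by linarith [hDnn x hxt.le hxπ.le]
    have hcap := hcap3 x hxt.le (by linarith [hq2t])
    have hUnn' : 0 ≤ U (x - t) := hUnn (x - t) (by linarith) (by linarith)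
    calc (U (x + t) - U (x - t)) / Real.tan (x / 2)
        ≤ 2 * (U (x + t) - U (x - t)) / x := hdiv _ x hDnn' (by linarith) hxπ
      _ ≤ 2 * (3 * U t) / x := by gcongr <;> linarith
      _ = 6 * U t / x := by ring
      _ ≤ 6 * U t / t := by gcongr
  have hb4 : ∀ x ∈ Set.Ioc q (2 * t), |f₂ x| ≤ 4 * α * U t / (x - t) := by
    intro x hx
    obtain ⟨hxq, hx2t⟩ := hx
    have hxt : t < x := lt_trans htq hxq
    have hxt0 : 0 < x - t := by linarith
    have hxπ : x ≤ π := le_trans hx2t h2t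
    rcases eq_or_lt_of_le hxπ with rfl | hxπ'
    · have e1 : f₂ π = 0 := by
        simp only [hf₂]
        rw [Real.tan_pi_div_two, div_zero]
      rw [e1, abs_zero]
      exact div_nonneg (mul_nonneg (by linarith) hUt.le) (by linarith)
    · have hD := hDle x hxt hxπ
      have hUxt : U (x - t) ≤ U t := hmono' (x - t) t (by linarith) (by linarith) (by linarith)
      have hfrac : 0 ≤ 2 * t / (x - t) := by positivity
      have hD2 : U (x + t) - U (x - t) ≤ α * U t * (2 * t / (x - t)) := by
        linarith [hD, mul_le_mul_of_nonneg_right (mul_le_mul_of_nonneg_left hUxt hα0.le) hfrac]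
      rw [habs2 x hxt.le hxπ']
      have hDnn' : 0 ≤ U (x + t) - U (x - t) := by linarith [hDnn x hxt.le hxπ]
      calc (U (x + t) - U (x - t)) / Real.tan (x / 2)
          ≤ 2 * (U (x + t) - U (x - t)) / x := hdiv _ x hDnn' (by linarith) hxπ'
        _ ≤ 2 * (α * U t * (2 * t / (x - t))) / x := by gcongr <;> linarith
        _ = 4 * α * U t / (x - t) * (t / x) := by field_simp; ring
        _ ≤ 4 * α * U t / (x - t) * 1 := by
            apply mul_le_mul_of_nonneg_left _ (by positivity)
            rw [div_le_one (by linarith)]; linarith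
        _ = 4 * α * U t / (x - t) := mul_one _
  have hb5 : ∀ x ∈ Set.Ioc (2 * t) π, |f₂ x| ≤ 8 * α * U t * t ^ (1 - α) * x ^ (α - 2) := by
    intro x hx
    obtain ⟨hx2t, hxπ⟩ := hx
    have hx0 : 0 < x := by linarith
    have hxt : t < x := by linarith
    have hxt0 : 0 < x - t := by linarith
    have hRHS : 0 ≤ 8 * α * U t * t ^ (1 - α) * x ^ (α - 2) :=
      mul_nonneg (mul_nonneg (mul_nonneg (by linarith) hUt.le)
        (Real.rpow_pos_of_pos ht0 _).le) (Real.rpow_pos_of_pos hx0 _).le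
    rcases eq_or_lt_of_le hxπ with rfl | hxπ'
    · have e1 : f₂ π = 0 := by
        simp only [hf₂]
        rw [Real.tan_pi_div_two, div_zero]
      rw [e1, abs_zero]
      exact hRHS
    · have hD := hDle x hxt hxπ
      have hUxt : U (x - t) ≤ U t * (x - t) ^ α / t ^ α := by
        have h := hratio t (x - t) ht0 (by linarith) (by linarith)
        rw [le_div_iff₀ (Real.rpow_pos_of_pos ht0 α)]; linarith
      have ht1α : t / t ^ α = t ^ (1 - α) := by
        rw [Real.rpow_sub ht0, Real.rpow_one]
      have hxt1 : (x - t) ^ α / (x - t) = (x - t) ^ (α - 1) :=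
        (Real.rpow_sub_one hxt0.ne' α).symm
      have hD2 : U (x + t) - U (x - t) ≤ 2 * α * U t * t ^ (1 - α) * (x - t) ^ (α - 1) := by
        have h1 : α * U (x - t) * (2 * t / (x - t)) ≤
            α * (U t * (x - t) ^ α / t ^ α) * (2 * t / (x - t)) := by
          have := mul_le_mul_of_nonneg_right
            (mul_le_mul_of_nonneg_left hUxt hα0.le) (by positivity : 0 ≤ 2 * t / (x - t))
          linarith
        have h2 : α * (U t * (x - t) ^ α / t ^ α) * (2 * t / (x - t)) =
            2 * α * U t * (t / t ^ α) * ((x - t) ^ α / (x - t)) := by ring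
        rw [h2, ht1α, hxt1] at h1
        linarith
      have hpow : (x - t) ^ (α - 1) ≤ 2 * x ^ (α - 1) := by
        have hbase : x / 2 ≤ x - t := by linarith
        have h1 : (x / 2) ^ (1 - α) ≤ (x - t) ^ (1 - α) :=
          Real.rpow_le_rpow (by positivity) hbase (by linarith)
        have h2 : (x - t) ^ (α - 1) ≤ (x / 2) ^ (α - 1) := by
          rw [show α - 1 = -(1 - α) by ring, Real.rpow_neg hxt0.le, Real.rpow_neg (by positivity)]
          exact inv_anti₀ (by positivity) h1
        have h3 : (x / 2) ^ (α - 1) = x ^ (α - 1) * 2 ^ (1 - α) := by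
          rw [Real.div_rpow hx0.le (by norm_num : (0:ℝ) ≤ 2), div_eq_mul_inv,
            ← Real.rpow_neg (by norm_num : (0:ℝ) ≤ 2), neg_sub]
        have h4 : (2:ℝ) ^ (1 - α) ≤ 2 := by
          calc (2:ℝ) ^ (1 - α) ≤ (2:ℝ) ^ (1:ℝ) :=
            Real.rpow_le_rpow_of_exponent_le (by norm_num) (by linarith)
          _ = 2 := Real.rpow_one 2
        have h5 : 0 ≤ x ^ (α - 1) := (Real.rpow_pos_of_pos hx0 _).le
        calc (x - t) ^ (α - 1) ≤ (x / 2) ^ (α - 1) := h2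
          _ = x ^ (α - 1) * 2 ^ (1 - α) := h3
          _ ≤ x ^ (α - 1) * 2 := by gcongr
          _ = 2 * x ^ (α - 1) := by ring
      have hD3 : U (x + t) - U (x - t) ≤ 4 * α * U t * t ^ (1 - α) * x ^ (α - 1) := by
        have hmul := mul_le_mul_of_nonneg_left hpow
          (mul_nonneg (mul_nonneg (by linarith) hUt.le) (Real.rpow_pos_of_pos ht0 _).le :
            (0:ℝ) ≤ 2 * α * U t * t ^ (1 - α))
        linarith [hD2, hmul]
      rw [habs2 x hxt.le hxπ']
      have hDnn' : 0 ≤ U (x + t) - U (x - t) := by linarith [hDnn x hxt.le hxπ]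
      have hxm : x ^ (α - 2) = x ^ (α - 1) / x := by
        rw [show α - 2 = α - 1 - 1 by ring, Real.rpow_sub_one hx0.ne']
      calc (U (x + t) - U (x - t)) / Real.tan (x / 2)
          ≤ 2 * (U (x + t) - U (x - t)) / x := hdiv _ x hDnn' (by linarith) hxπ'
        _ ≤ 2 * (4 * α * U t * t ^ (1 - α) * x ^ (α - 1)) / x := by gcongr <;> linarith
        _ = 8 * α * U t * t ^ (1 - α) * (x ^ (α - 1) / x) := by ring
        _ = 8 * α * U t * t ^ (1 - α) * x ^ (α - 2) := by rw [← hxm]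

  -- helper constants
  have htp : t - p = β * t := by simp only [hpdef]; ring
  have hqt : q - t = β * t := by simp only [hqdef]; ring
  have hβt : 0 < β * t := by positivity
  have hnum1 : 0 ≤ 4 * α * U t := by linarith [mul_nonneg hα0.le hUt.le]
  -- integrability of the five pieces
  have i1 : IntervalIntegrable f₁ volume 0 p := by
    apply myIntegrable_of_bound hp0.le hm1 (C := 4 * α * U t / (t - p))
    intro x hx
    refine (hb1 x hx).trans ?_
    gcongr
    linarith [hx.2]
  have i2 : IntervalIntegrable f₁ volume p t := by
    apply myIntegrable_of_bound hppt.le hm1 (C := 4 * U t / p)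
    exact hb2
  have i3 : IntervalIntegrable f₂ volume t q := by
    apply myIntegrable_of_bound htq.le hm2 (C := 6 * U t / t)
    exact hb3
  have i4 : IntervalIntegrable f₂ volume q (2 * t) := by
    apply myIntegrable_of_bound hq2t.le hm2 (C := 4 * α * U t / (q - t))
    intro x hx
    refine (hb4 x hx).trans ?_
    gcongr
    linarith [hx.1]
  have i5 : IntervalIntegrable f₂ volume (2 * t) π := by
    apply myIntegrable_of_bound h2t hm2 (C := 8 * α * U t * t ^ (1 - α) * (2 * t) ^ (α - 2))
    intro x hx
    refine (hb5 x hx).trans ?_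
    have hx0 : 0 < x := lt_trans (by linarith) hx.1
    have hxm : x ^ (α - 2) ≤ (2 * t) ^ (α - 2) := by
      rw [show α - 2 = -(2 - α) by ring, Real.rpow_neg hx0.le, Real.rpow_neg (by linarith)]
      apply inv_anti₀ (Real.rpow_pos_of_pos (by linarith) _)
      exact Real.rpow_le_rpow (by linarith) hx.1.le (by linarith)
    have hcnn : 0 ≤ 8 * α * U t * t ^ (1 - α) :=
      mul_nonneg (mul_nonneg (by linarith) hUt.le) (Real.rpow_pos_of_pos ht0 _).le
    exact mul_le_mul_of_nonneg_left hxm hcnn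
  -- splitting the two integrals
  have hI1 : (∫ x in (0:ℝ)..t, f₁ x) = (∫ x in (0:ℝ)..p, f₁ x) + ∫ x in p..t, f₁ x :=
    (intervalIntegral.integral_add_adjacent_intervals i1 i2).symm
  have hI2 : (∫ x in t..π, f₂ x) =
      ((∫ x in t..q, f₂ x) + ∫ x in q..(2*t), f₂ x) + ∫ x in (2*t)..π, f₂ x := by
    rw [intervalIntegral.integral_add_adjacent_intervals i3 i4,
      intervalIntegral.integral_add_adjacent_intervals (i3.trans i4) i5]
  -- log bound
  have hloginv : Real.log (β⁻¹) ≤ β⁻¹ := by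
    have := Real.log_le_sub_one_of_pos (inv_pos.2 hβ0)
    linarith
  have hβinv : β⁻¹ = 2 / Real.sqrt α := by
    simp only [hβdef]
    rw [inv_div]
  -- B1
  have hg1 : IntervalIntegrable (fun x => 4 * α * U t / (t - x)) volume 0 p := by
    apply ContinuousOn.intervalIntegrable
    apply ContinuousOn.div continuousOn_const (continuousOn_const.sub continuousOn_id)
    intro x hx
    rw [Set.uIcc_of_le hp0.le] at hx
    have hxp : x ≤ p := hx.2
    exact (by linarith : (0:ℝ) < t - x).ne'
  have e1 : (∫ x in (0:ℝ)..p, 4 * α * U t / (t - x)) = 4 * α * U t * Real.log (t / (t - p)) := by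
    simp_rw [div_eq_mul_inv]
    rw [intervalIntegral.integral_const_mul]
    congr 1
    have e2 : (∫ x in (0:ℝ)..p, (t - x)⁻¹) = ∫ u in (t - p)..(t - 0), u⁻¹ :=
      intervalIntegral.integral_comp_sub_left (fun u => u⁻¹) t
    rw [e2]
    rw [sub_zero]
    apply integral_inv
    rw [Set.uIcc_of_le (by linarith)]
    intro hcon
    have := hcon.1
    rw [htp] at this
    linarith
  have hlogpos : 0 ≤ Real.log (t / (t - p)) := by
    apply Real.log_nonneg
    rw [le_div_iff₀ (by rw [htp]; exact hβt)]
    linarith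
  have hlogval : Real.log (t / (t - p)) = Real.log β⁻¹ := by
    rw [htp]
    congr 1
    field_simp
  have B1 : |∫ x in (0:ℝ)..p, f₁ x| ≤ 8 * Real.sqrt α * U t := by
    rw [← Real.norm_eq_abs]
    have h := intervalIntegral.norm_integral_le_abs_of_norm_le (μ := volume) (f := f₁)
      (g := fun x => 4 * α * U t / (t - x)) ?_ hg1
    · rw [e1, abs_of_nonneg (mul_nonneg hnum1 hlogpos)] at h
      refine h.trans ?_
      rw [hlogval]
      have h2 : 4 * α * U t * Real.log β⁻¹ ≤ 4 * α * U t * (2 / Real.sqrt α) := by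
        apply mul_le_mul_of_nonneg_left _ hnum1
        rw [← hβinv]; exact hloginv
      refine h2.trans ?_
      have hdivs : α / Real.sqrt α = Real.sqrt α := by
        rw [div_eq_iff hsα.ne']; exact hss.symm
      have : 4 * α * U t * (2 / Real.sqrt α) = 8 * Real.sqrt α * U t := by
        rw [show 4 * α * U t * (2 / Real.sqrt α) = 8 * U t * (α / Real.sqrt α) by ring, hdivs]
        ring
      linarith
    · rw [Set.uIoc_of_le hp0.le]
      refine (ae_restrict_iff' measurableSet_Ioc).2 (ae_of_all _ ?_)
      intro x hx; rw [Real.norm_eq_abs]; exact hb1 x hx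
  -- B2
  have B2 : |∫ x in p..t, f₁ x| ≤ 4 * Real.sqrt α * U t := by
    rw [← Real.norm_eq_abs]
    have h := intervalIntegral.norm_integral_le_of_norm_le_const (C := 4 * U t / p)
      (f := f₁) (a := p) (b := t) ?_
    · refine h.trans ?_
      rw [abs_of_nonneg (by linarith), htp]
      have hp2 : t / 2 ≤ p := by
        have h0 : 0 ≤ t * (1/2 - β) := mul_nonneg ht0.le (by linarith)
        simp only [hpdef]; linarith [mul_nonneg ht0.le (by linarith : (0:ℝ) ≤ 1/2 - β)]
      have e : 4 * U t * (β * t) = 4 * Real.sqrt α * U t * (t / 2) := by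
        simp only [hβdef]; ring
      rw [div_mul_eq_mul_div, div_le_iff₀ hp0, e]
      exact mul_le_mul_of_nonneg_left hp2
        (mul_nonneg (mul_nonneg (by norm_num) hsα.le) hUt.le)
    · intro x hx
      rw [Set.uIoc_of_le hppt.le] at hx
      rw [Real.norm_eq_abs]; exact hb2 x hx
  -- B3
  have B3 : |∫ x in t..q, f₂ x| ≤ 3 * Real.sqrt α * U t := by
    rw [← Real.norm_eq_abs]
    have h := intervalIntegral.norm_integral_le_of_norm_le_const (C := 6 * U t / t)
      (f := f₂) (a := t) (b := q) ?_
    · refine h.trans ?_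
      rw [abs_of_nonneg (by linarith), hqt]
      rw [div_mul_eq_mul_div, div_le_iff₀ ht0]
      have e : 6 * U t * (β * t) = 3 * Real.sqrt α * U t * t := by
        simp only [hβdef]; ring
      rw [e]
    · intro x hx
      rw [Set.uIoc_of_le htq.le] at hx
      rw [Real.norm_eq_abs]; exact hb3 x hx
  -- B4
  have hg4 : IntervalIntegrable (fun x => 4 * α * U t / (x - t)) volume q (2*t) := by
    apply ContinuousOn.intervalIntegrable
    apply ContinuousOn.div continuousOn_const (continuousOn_id.sub continuousOn_const)
    intro x hx
    rw [Set.uIcc_of_le hq2t.le] at hx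
    have hqx : q ≤ x := hx.1
    exact (by linarith : (0:ℝ) < x - t).ne'
  have e4 : (∫ x in q..(2*t), 4 * α * U t / (x - t)) = 4 * α * U t * Real.log (t / (q - t)) := by
    simp_rw [div_eq_mul_inv]
    rw [intervalIntegral.integral_const_mul]
    congr 1
    have e2 : (∫ x in q..(2*t), (x - t)⁻¹) = ∫ u in (q - t)..(2*t - t), u⁻¹ :=
      intervalIntegral.integral_comp_sub_right (fun u => u⁻¹) t
    rw [e2, show 2*t - t = t by ring]
    apply integral_inv
    rw [Set.uIcc_of_le (by linarith [hq2t] : q - t ≤ t)]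
    intro hcon
    have := hcon.1
    rw [hqt] at this
    linarith
  have hlogpos4 : 0 ≤ Real.log (t / (q - t)) := by
    apply Real.log_nonneg
    rw [le_div_iff₀ (by rw [hqt]; exact hβt)]
    linarith
  have hlogval4 : Real.log (t / (q - t)) = Real.log β⁻¹ := by
    rw [hqt]
    congr 1
    field_simp
  have B4 : |∫ x in q..(2*t), f₂ x| ≤ 8 * Real.sqrt α * U t := by
    rw [← Real.norm_eq_abs]
    have h := intervalIntegral.norm_integral_le_abs_of_norm_le (μ := volume) (f := f₂)
      (g := fun x => 4 * α * U t / (x - t)) ?_ hg4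
    · rw [e4, abs_of_nonneg (mul_nonneg hnum1 hlogpos4)] at h
      refine h.trans ?_
      rw [hlogval4]
      have h2 : 4 * α * U t * Real.log β⁻¹ ≤ 4 * α * U t * (2 / Real.sqrt α) := by
        apply mul_le_mul_of_nonneg_left _ hnum1
        rw [← hβinv]; exact hloginv
      refine h2.trans ?_
      have hdivs : α / Real.sqrt α = Real.sqrt α := by
        rw [div_eq_iff hsα.ne']; exact hss.symm
      have : 4 * α * U t * (2 / Real.sqrt α) = 8 * Real.sqrt α * U t := by
        rw [show 4 * α * U t * (2 / Real.sqrt α) = 8 * U t * (α / Real.sqrt α) by ring, hdivs]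
        ring
      linarith
    · rw [Set.uIoc_of_le hq2t.le]
      refine (ae_restrict_iff' measurableSet_Ioc).2 (ae_of_all _ ?_)
      intro x hx; rw [Real.norm_eq_abs]; exact hb4 x hx
  -- B5
  have hg5 : IntervalIntegrable (fun x => 8 * α * U t * t ^ (1-α) * x ^ (α - 2)) volume (2*t) π := by
    apply ContinuousOn.intervalIntegrable
    apply ContinuousOn.mul continuousOn_const
    apply ContinuousOn.rpow_const continuousOn_id
    intro x hx
    rw [Set.uIcc_of_le h2t] at hx
    exact Or.inl (by simp; linarith [hx.1])
  have e5 : (∫ x in (2*t)..π, 8 * α * U t * t ^ (1-α) * x ^ (α - 2)) =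
      8 * α * U t * t ^ (1-α) * ((π ^ (α-1) - (2*t) ^ (α-1)) / (α-1)) := by
    rw [intervalIntegral.integral_const_mul]
    congr 1
    rw [integral_rpow]
    · rw [show α - 2 + 1 = α - 1 by ring]
    · right
      constructor
      · intro hcon; rw [show α - 2 = -1 ↔ α = 1 by constructor <;> (intro h; linarith)] at hcon; linarith
      · rw [Set.uIcc_of_le h2t]
        intro hcon
        linarith [hcon.1]
  have B5 : |∫ x in (2*t)..π, f₂ x| ≤ 8 * Real.sqrt α * U t / (1 - α) := by
    rw [← Real.norm_eq_abs]
    have h := intervalIntegral.norm_integral_le_abs_of_norm_le (μ := volume) (f := f₂)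
      (g := fun x => 8 * α * U t * t ^ (1-α) * x ^ (α - 2)) ?_ hg5
    · rw [e5] at h
      have hπa : 0 ≤ π ^ (α-1) := (Real.rpow_pos_of_pos hπ _).le
      have h2ta : 0 < (2*t) ^ (α-1) := Real.rpow_pos_of_pos (by linarith) _
      have hcnn : 0 ≤ 8 * α * U t * t ^ (1-α) :=
        mul_nonneg (mul_nonneg (by linarith) hUt.le) (Real.rpow_pos_of_pos ht0 _).le
      have step1 : (π ^ (α-1) - (2*t) ^ (α-1)) / (α-1) = ((2*t) ^ (α-1) - π ^ (α-1)) / (1-α) := by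
        rw [div_eq_div_iff (by linarith) (by linarith)]
        ring
      have step2 : ((2*t) ^ (α-1) - π ^ (α-1)) / (1-α) ≤ (2*t) ^ (α-1) / (1-α) := by
        gcongr
        linarith
      have step3 : 8 * α * U t * t ^ (1-α) * ((2*t) ^ (α-1) / (1-α)) ≤
          8 * Real.sqrt α * U t / (1 - α) := by
        have hmul : t ^ (1-α) * (2*t) ^ (α-1) ≤ 1 := by
          rw [Real.mul_rpow (by norm_num) ht0.le]
          have htt : t ^ (1-α) * t ^ (α-1) = 1 := by
            rw [← Real.rpow_add ht0]; norm_num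
          have h21 : (2:ℝ) ^ (α-1) ≤ 1 :=
            Real.rpow_le_one_of_one_le_of_nonpos (by norm_num) (by linarith)
          calc t ^ (1-α) * ((2:ℝ) ^ (α-1) * t ^ (α-1))
              = (t ^ (1-α) * t ^ (α-1)) * (2:ℝ) ^ (α-1) := by ring
            _ = (2:ℝ) ^ (α-1) := by rw [htt, one_mul]
            _ ≤ 1 := h21
        have e6 : 8 * α * U t * t ^ (1-α) * ((2*t) ^ (α-1) / (1-α)) =
            (8 * α * U t) * (t ^ (1-α) * (2*t) ^ (α-1)) / (1-α) := by ring
        rw [e6]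
        have h7 : (8 * α * U t) * (t ^ (1-α) * (2*t) ^ (α-1)) ≤ 8 * Real.sqrt α * U t := by
          have h8 : (8 * α * U t) * (t ^ (1-α) * (2*t) ^ (α-1)) ≤ (8 * α * U t) * 1 :=
            mul_le_mul_of_nonneg_left hmul (by linarith)
          have h9 : 8 * α * U t ≤ 8 * Real.sqrt α * U t := by
            linarith [mul_le_mul_of_nonneg_right hαs hUt.le]
          linarith
        gcongr
      have h2tπ : π ^ (α-1) ≤ (2*t) ^ (α-1) := by
        rw [show α - 1 = -(1 - α) by ring, Real.rpow_neg (by linarith : (0:ℝ) ≤ 2*t),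
          Real.rpow_neg hπ.le]
        apply inv_anti₀ (Real.rpow_pos_of_pos (by linarith) _)
        exact Real.rpow_le_rpow (by linarith) h2t (by linarith)
      have step4 : 8 * α * U t * t ^ (1-α) * ((π ^ (α-1) - (2*t) ^ (α-1)) / (α-1)) =
          8 * α * U t * t ^ (1-α) * (((2*t) ^ (α-1) - π ^ (α-1)) / (1-α)) := by
        rw [step1]
      rw [step4, abs_of_nonneg (mul_nonneg hcnn (div_nonneg (by linarith) h1α.le))] at h
      have step5 := mul_le_mul_of_nonneg_left step2 hcnn
      linarith [h, step5, step3]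
    · rw [Set.uIoc_of_le h2t]
      refine (ae_restrict_iff' measurableSet_Ioc).2 (ae_of_all _ ?_)
      intro x hx; rw [Real.norm_eq_abs]; exact hb5 x hx
  -- combine
  have tri : ∀ A B : ℝ, |A - B| ≤ |A| + |B| := fun A B => by
    rw [sub_eq_add_neg]
    exact (abs_add_le _ _).trans (le_of_eq (by rw [abs_neg]))
  have hsum1 : |∫ x in (0:ℝ)..t, f₁ x| ≤ 12 * Real.sqrt α * U t := by
    rw [hI1]
    have := abs_add_le (∫ x in (0:ℝ)..p, f₁ x) (∫ x in p..t, f₁ x)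
    linarith
  have hsum2 : |∫ x in t..π, f₂ x| ≤
      11 * Real.sqrt α * U t + 8 * Real.sqrt α * U t / (1 - α) := by
    rw [hI2]
    have ha := abs_add_le ((∫ x in t..q, f₂ x) + ∫ x in q..(2*t), f₂ x) (∫ x in (2*t)..π, f₂ x)
    have hb := abs_add_le (∫ x in t..q, f₂ x) (∫ x in q..(2*t), f₂ x)
    linarith
  have hgoal : conjFun U t = 1/(2*π) * (∫ x in (0:ℝ)..t, f₁ x)
      - 1/(2*π) * (∫ x in t..π, f₂ x) := rfl
  rw [hgoal]
  have h2π : 1 ≤ 2*π := by linarith [Real.pi_gt_three]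
  have hA1 : 1/(2*π) ≤ 1 := by rw [div_le_one (by linarith)]; linarith
  have hA0 : 0 ≤ 1/(2*π) := by positivity
  have hAbs : |1/(2*π) * (∫ x in (0:ℝ)..t, f₁ x) - 1/(2*π) * (∫ x in t..π, f₂ x)| ≤
      |∫ x in (0:ℝ)..t, f₁ x| + |∫ x in t..π, f₂ x| := by
    refine (tri _ _).trans ?_
    rw [abs_mul, abs_mul, abs_of_nonneg hA0]
    have g1 := mul_le_of_le_one_left (abs_nonneg (∫ x in (0:ℝ)..t, f₁ x)) hA1
    have g2 := mul_le_of_le_one_left (abs_nonneg (∫ x in t..π, f₂ x)) hA1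
    linarith
  have hfin : 12 * Real.sqrt α * U t +
      (11 * Real.sqrt α * U t + 8 * Real.sqrt α * U t / (1 - α)) ≤
      31 * (Real.sqrt α / (1 - α)) * U t := by
    have h1 : 23 * Real.sqrt α * U t ≤ 23 * Real.sqrt α * U t / (1 - α) := by
      rw [le_div_iff₀ h1α]
      linarith [mul_nonneg (mul_nonneg hsα.le hUt.le) hα0.le]
    have h2 : 23 * Real.sqrt α * U t / (1 - α) + 8 * Real.sqrt α * U t / (1 - α) =
        31 * (Real.sqrt α / (1 - α)) * U t := by ring
    linarith
  linarith



end
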